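/- Let k ≥ 1, s ≥ 2 and 0 ≤ ℓ ≤ s·k − 1 be integers. Then there exists an integer n₁ (depending on s, k and ℓ) such that for every n ≥ n₁ there exists an s-uniform (k,ℓ)-tight hypergraph on n vertices. -/
import Mathlib

/-- The number of edges of the multiset `E` spanned by the vertex set `W`. -/
def spanCount {V : Type*} [DecidableEq V] (E : Multiset (Finset V)) (W : Finset V) : ℕ :=
  (E.filter fun e => e ⊆ W).card

/-- A hypergraph with edge multiset `E` is `(k,ℓ)`-sparse if every vertex subset spanning
at least one edge spans at most `k|W| - ℓ` edges. -/
def Sparse {V : Type*} [DecidableEq V] (k l : ℕ) (E : Multiset (Finset V)) : Prop :=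
  ∀ W : Finset V, 1 ≤ spanCount E W → spanCount E W + l ≤ k * W.card

namespace St4
open Finset

/-- k-fold sunflower with core `range c` and petals in `Ico c n`. -/
def sunE (k c n : ℕ) : Multiset (Finset ℕ) :=
  ((Finset.Ico c n) ×ˢ (Finset.range k)).val.map (fun q => insert q.1 (Finset.range c))

/-- x copies of the full edge `range s`. -/
def fullE (x s : ℕ) : Multiset (Finset ℕ) := Multiset.replicate x (Finset.range s)

/-- the nugget: coned clique on `range (2τ+1)` with cone set `Ico (2τ+1) (2τ+1+σ)`,
plus top edges. Uniformity s = σ+2, K = τ+1, ℓ = K s - 1. -/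
def nugE (τ σ n : ℕ) : Multiset (Finset ℕ) :=
  (Finset.powersetCard 2 (Finset.range (2*τ+1))).val.map
      (fun P => P ∪ Finset.Ico (2*τ+1) (2*τ+1+σ))
  + ((Finset.Ico (2*τ+1+σ) n) ×ˢ (Finset.range (τ+1))).val.map
      (fun q => insert q.1 (insert q.2 (Finset.Ico (2*τ+1) (2*τ+1+σ))))

lemma spanCount_add {V : Type*} [DecidableEq V] (E1 E2 : Multiset (Finset V)) (W : Finset V) :
    spanCount (E1 + E2) W = spanCount E1 W + spanCount E2 W := by
  simp [spanCount, Multiset.filter_add]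

lemma spanCount_map {α : Type*} (A : Finset α) (f : α → Finset ℕ) (W : Finset ℕ) :
    spanCount (A.val.map f) W = (A.filter (fun q => f q ⊆ W)).card := by
  simp [spanCount, Multiset.filter_map]
  rfl

lemma spanCount_map_prod (A B : Finset ℕ) (f : ℕ × ℕ → Finset ℕ) (W : Finset ℕ) :
    spanCount ((A ×ˢ B).val.map f) W = ((A ×ˢ B).filter (fun q => f q ⊆ W)).card :=
  spanCount_map _ _ _

lemma spanCount_replicate (x : ℕ) (e : Finset ℕ) (W : Finset ℕ) :
    spanCount (Multiset.replicate x e) W = if e ⊆ W then x else 0 := by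
  unfold spanCount
  by_cases h : e ⊆ W
  · rw [if_pos h, Multiset.filter_eq_self.2, Multiset.card_replicate]
    intro a ha
    rw [Multiset.eq_of_mem_replicate ha]; exact h
  · rw [if_neg h, Multiset.filter_eq_nil.2, Multiset.card_zero]
    intro a ha
    rw [Multiset.eq_of_mem_replicate ha]; exact h

/-- union lemma -/
lemma sparse_union {k1 l1 k2 l2 s : ℕ} {E1 E2 : Multiset (Finset ℕ)}
    (h1 : Sparse k1 l1 E1) (h2 : Sparse k2 l2 E2)
    (u1 : ∀ e ∈ E1, e.card = s) (u2 : ∀ e ∈ E2, e.card = s)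
    (hl1 : l1 ≤ k1 * s) (hl2 : l2 ≤ k2 * s) :
    Sparse (k1 + k2) (l1 + l2) (E1 + E2) := by
  intro W hW
  rw [spanCount_add] at hW ⊢
  have key : ∀ (E : Multiset (Finset ℕ)), (∀ e ∈ E, e.card = s) → 1 ≤ spanCount E W →
      s ≤ W.card := by
    intro E hu hE
    have : ∃ e ∈ E.filter (fun e => e ⊆ W), True := by
      have : 0 < (E.filter (fun e => e ⊆ W)).card := hE
      rcases Multiset.card_pos_iff_exists_mem.1 this with ⟨e, he⟩
      exact ⟨e, he, trivial⟩
    rcases this with ⟨e, he, -⟩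
    have hm := Multiset.mem_filter.1 he
    calc s = e.card := (hu e hm.1).symm
      _ ≤ W.card := Finset.card_le_card hm.2
  rcases Nat.eq_zero_or_pos (spanCount E1 W) with h10 | h11 <;>
  rcases Nat.eq_zero_or_pos (spanCount E2 W) with h20 | h21
  · omega
  · have hs := key E2 u2 h21
    have := h2 W h21
    have : l1 ≤ k1 * W.card := le_trans hl1 (Nat.mul_le_mul_left _ hs)
    nlinarith [h2 W h21]
  · have hs := key E1 u1 h11
    have h2' : l2 ≤ k2 * W.card := le_trans hl2 (Nat.mul_le_mul_left _ hs)
    nlinarith [h1 W h11]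
  · nlinarith [h1 W h11, h2 W h21]

lemma sun_card (k c x n s : ℕ) (hn : c ≤ n) :
    Multiset.card (sunE k c n + fullE x s) + k * c = k * n + x := by
  obtain ⟨d, rfl⟩ : ∃ d, n = c + d := ⟨n - c, by omega⟩
  simp [sunE, fullE, Nat.card_Ico]
  ring

lemma sun_uniform (k c x n : ℕ) : ∀ e ∈ sunE k c n + fullE x (c+1), e.card = c + 1 := by
  intro e he
  rcases Multiset.mem_add.1 he with h | h
  · simp only [sunE, Multiset.mem_map, Finset.mem_val, Finset.mem_product] at h
    rcases h with ⟨q, ⟨hq1, _⟩, rfl⟩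
    rw [Finset.card_insert_of_notMem, Finset.card_range]
    simp only [Finset.mem_range]
    exact Nat.not_lt.2 (Finset.mem_Ico.1 hq1).1
  · rw [Multiset.eq_of_mem_replicate h, Finset.card_range]

lemma sun_subset (k c x n : ℕ) (hn : c + 1 ≤ n) :
    ∀ e ∈ sunE k c n + fullE x (c+1), e ⊆ Finset.range n := by
  intro e he
  rcases Multiset.mem_add.1 he with h | h
  · simp only [sunE, Multiset.mem_map, Finset.mem_val, Finset.mem_product] at h
    rcases h with ⟨q, ⟨hq1, _⟩, rfl⟩
    have hq := Finset.mem_Ico.1 hq1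
    intro a ha
    rcases Finset.mem_insert.1 ha with rfl | ha
    · exact Finset.mem_range.2 hq.2
    · exact Finset.mem_range.2 (by have := Finset.mem_range.1 ha; omega)
  · rw [Multiset.eq_of_mem_replicate h]
    exact Finset.range_subset_range.2 hn

lemma sun_sparse (k c x l n : ℕ) (hx : l + x = k * c) :
    Sparse k l (sunE k c n + fullE x (c+1)) := by
  intro W hW
  rw [spanCount_add] at hW ⊢
  simp only [sunE, fullE] at hW ⊢
  rw [spanCount_map_prod, spanCount_replicate] at hW ⊢
  by_cases hcore : Finset.range c ⊆ W
  · -- count the sunflower part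
    have hfil : (Finset.filter (fun q => insert q.1 (Finset.range c) ⊆ W)
        ((Finset.Ico c n) ×ˢ (Finset.range k))) =
        ((Finset.Ico c n).filter (fun j => j ∈ W)) ×ˢ Finset.range k := by
      ext q
      simp only [Finset.mem_filter, Finset.mem_product, Finset.insert_subset_iff, hcore, and_true]
      tauto
    rw [hfil, Finset.card_product, Finset.card_range] at hW ⊢
    set p := ((Finset.Ico c n).filter (fun j => j ∈ W)).card with hp
    -- |W| ≥ c + p
    have hcard : c + p ≤ W.card := by
      have hsub : Finset.range c ∪ ((Finset.Ico c n).filter (fun j => j ∈ W)) ⊆ W := by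
        apply Finset.union_subset hcore
        intro j hj
        exact (Finset.mem_filter.1 hj).2
      have hdis : Disjoint (Finset.range c) ((Finset.Ico c n).filter (fun j => j ∈ W)) := by
        rw [Finset.disjoint_left]
        intro a ha hb
        have := Finset.mem_range.1 ha
        have := (Finset.mem_Ico.1 (Finset.mem_filter.1 hb).1).1
        omega
      calc c + p = (Finset.range c ∪ _).card := by
            rw [Finset.card_union_of_disjoint hdis, Finset.card_range]
        _ ≤ W.card := Finset.card_le_card hsub
    have hxb : (if Finset.range (c+1) ⊆ W then x else 0) ≤ x := by
      split <;> omega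
    have : p * k + x + l ≤ k * W.card := by
      have : p * k + (x + l) ≤ k * (c + p) := by
        rw [Nat.add_comm x l, hx]; ring_nf; omega
      calc p * k + x + l = p * k + (x + l) := by ring
        _ ≤ k * (c + p) := this
        _ ≤ k * W.card := Nat.mul_le_mul_left _ hcard
    omega
  · -- no edge can be inside W
    exfalso
    have h1 : (Finset.filter (fun q => insert q.1 (Finset.range c) ⊆ W)
        ((Finset.Ico c n) ×ˢ (Finset.range k))) = ∅ := by
      apply Finset.filter_false_of_mem
      intro q _ hq
      exact hcore (le_trans (Finset.subset_insert _ _) hq)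
    have h2 : ¬ (Finset.range (c+1) ⊆ W) := by
      intro h
      exact hcore (le_trans (Finset.range_subset_range.2 (Nat.le_succ c)) h)
    rw [h1, if_neg h2] at hW
    simp at hW

lemma two_mul_choose_two : ∀ m : ℕ, 2 * Nat.choose m 2 = m * (m-1)
  | 0 => rfl
  | 1 => rfl
  | (m+2) => by
    have h : Nat.choose (m+2) 2 = (m+1) + Nat.choose (m+1) 2 := by
      rw [Nat.choose_succ_succ (m+1) 1, Nat.choose_one_right]
    rw [h, Nat.mul_add, two_mul_choose_two (m+1)]
    have e1 : m + 2 - 1 = m + 1 := by omega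
    have e2 : m + 1 - 1 = m := by omega
    rw [e1, e2]
    ring

lemma key_ineq (τ a t β : ℕ) (ha : a ≤ 2*τ+1) (hb1 : β ≤ τ+1) (hb2 : β ≤ a)
    (hpos : 1 ≤ a.choose 2 + t*β) :
    a.choose 2 + t*β + 2*(τ+1) ≤ (τ+1)*a + (τ+1)*t + 1 := by
  match a, ha, hb2 with
  | 0, _, hb2 =>
    interval_cases β
    simp at hpos
  | 1, _, hb2 =>
    interval_cases β
    · simp at hpos
    · simp only [Nat.choose_eq_zero_of_lt (by omega : 1 < 2), Nat.zero_add, Nat.mul_one] at hpos ⊢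
      obtain ⟨t', rfl⟩ : ∃ t', t = t' + 1 := ⟨t - 1, by omega⟩
      nlinarith [Nat.zero_le (τ * t')]
  | (b+2), ha, hb2 =>
    obtain ⟨r, hr⟩ : ∃ r, b + 1 + r = 2*τ := ⟨2*τ - (b+1), by omega⟩
    have h2 : 2 * Nat.choose (b+2) 2 = (b+2) * (b+1) := by
      rw [two_mul_choose_two]; simp
    have htb : t * β ≤ t * (τ+1) := Nat.mul_le_mul_left _ hb1
    have hc : t * (τ+1) = (τ+1) * t := Nat.mul_comm _ _
    have main : (b+2)*(b+1) + 2*(2*(τ+1)) ≤ 2*((τ+1)*(b+2)) + 2 := by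
      nlinarith [Nat.zero_le (r*b), hr]
    have goal2 : 2 * (Nat.choose (b+2) 2 + t*β + 2*(τ+1)) ≤ 2 * ((τ+1)*(b+2) + (τ+1)*t + 1) := by
      linarith [h2, htb, main, hc]
    exact Nat.le_of_mul_le_mul_left goal2 (by norm_num)

lemma nug_card (τ σ n : ℕ) (hn : 2*τ+1+σ ≤ n) :
    Multiset.card (nugE τ σ n) + (τ+1)*(σ+2) = (τ+1)*n + 1 := by
  obtain ⟨e, rfl⟩ : ∃ e, n = 2*τ+1+σ+e := ⟨n - (2*τ+1+σ), by omega⟩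
  simp [nugE, Nat.card_Ico, Finset.card_powersetCard, Finset.card_range]
  have hc : Nat.choose (2*τ+1) 2 = τ * (2*τ+1) := by
    have h := two_mul_choose_two (2*τ+1)
    have h' : (2*τ+1) * (2*τ+1-1) = 2 * (τ * (2*τ+1)) := by
      rw [Nat.add_sub_cancel]; ring
    omega
  rw [hc]
  ring

lemma nug_uniform (τ σ n : ℕ) : ∀ e ∈ nugE τ σ n, e.card = σ + 2 := by
  intro e he
  rcases Multiset.mem_add.1 he with h | h
  · simp only [Multiset.mem_map, Finset.mem_val] at h
    rcases h with ⟨P, hP, rfl⟩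
    rw [Finset.mem_powersetCard] at hP
    rw [Finset.card_union_of_disjoint, hP.2, Nat.card_Ico]
    · omega
    · rw [Finset.disjoint_left]
      intro x hx hx'
      have h1 := Finset.mem_range.1 (hP.1 hx)
      have h2 := (Finset.mem_Ico.1 hx').1
      omega
  · simp only [Multiset.mem_map, Finset.mem_val, Finset.mem_product] at h
    rcases h with ⟨q, ⟨hq1, hq2⟩, rfl⟩
    have hv := Finset.mem_Ico.1 hq1
    have hi := Finset.mem_range.1 hq2
    have h1 : q.2 ∉ Finset.Ico (2*τ+1) (2*τ+1+σ) := by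
      intro hmem
      have := (Finset.mem_Ico.1 hmem).1
      omega
    have h2 : q.1 ∉ insert q.2 (Finset.Ico (2*τ+1) (2*τ+1+σ)) := by
      intro hmem
      rcases Finset.mem_insert.1 hmem with h' | h'
      · omega
      · have := Finset.mem_Ico.1 h'
        omega
    rw [Finset.card_insert_of_notMem h2, Finset.card_insert_of_notMem h1, Nat.card_Ico]
    omega

lemma nug_subset (τ σ n : ℕ) (hn : 2*τ+1+σ ≤ n) :
    ∀ e ∈ nugE τ σ n, e ⊆ Finset.range n := by
  intro e he
  rcases Multiset.mem_add.1 he with h | h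
  · simp only [Multiset.mem_map, Finset.mem_val] at h
    rcases h with ⟨P, hP, rfl⟩
    rw [Finset.mem_powersetCard] at hP
    apply Finset.union_subset
    · exact le_trans hP.1 (Finset.range_subset_range.2 (by omega))
    · intro x hx
      have := Finset.mem_Ico.1 hx
      exact Finset.mem_range.2 (by omega)
  · simp only [Multiset.mem_map, Finset.mem_val, Finset.mem_product] at h
    rcases h with ⟨q, ⟨hq1, hq2⟩, rfl⟩
    have hv := Finset.mem_Ico.1 hq1
    have hi := Finset.mem_range.1 hq2
    intro x hx
    rcases Finset.mem_insert.1 hx with rfl | hx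
    · exact Finset.mem_range.2 (by omega)
    · rcases Finset.mem_insert.1 hx with rfl | hx
      · exact Finset.mem_range.2 (by omega)
      · have := Finset.mem_Ico.1 hx
        exact Finset.mem_range.2 (by omega)

lemma nug_sparse (τ σ n lB : ℕ) (hlB : lB + 1 = (τ+1)*(σ+2)) :
    Sparse (τ+1) lB (nugE τ σ n) := by
  intro W hW
  rw [nugE, spanCount_add, spanCount_map, spanCount_map] at hW ⊢
  set M := 2*τ+1 with hM
  set Z := Finset.Ico M (M+σ) with hZdef
  by_cases hZ : Z ⊆ W
  case neg =>
    exfalso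
    have h1 : (Finset.filter (fun P => P ∪ Z ⊆ W) (Finset.powersetCard 2 (Finset.range M))) = ∅ := by
      apply Finset.filter_false_of_mem
      intro P _ hP
      exact hZ (le_trans Finset.subset_union_right hP)
    have h2 : (Finset.filter (fun q => insert q.1 (insert q.2 Z) ⊆ W)
        ((Finset.Ico (M+σ) n) ×ˢ (Finset.range (τ+1)))) = ∅ := by
      apply Finset.filter_false_of_mem
      intro q _ hq
      exact hZ (fun x hx => hq (Finset.mem_insert_of_mem (Finset.mem_insert_of_mem hx)))
    rw [h1, h2] at hW
    simp at hW
  case pos =>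
  -- compute the two counts
  have hbase : (Finset.filter (fun P => P ∪ Z ⊆ W) (Finset.powersetCard 2 (Finset.range M))) =
      Finset.powersetCard 2 (Finset.range M ∩ W) := by
    ext P
    simp only [Finset.mem_filter, Finset.mem_powersetCard, Finset.union_subset_iff,
      Finset.subset_inter_iff, hZ, and_true]
    tauto
  have htop : (Finset.filter (fun q => insert q.1 (insert q.2 Z) ⊆ W)
      ((Finset.Ico (M+σ) n) ×ˢ (Finset.range (τ+1)))) =
      ((Finset.Ico (M+σ) n).filter (fun j => j ∈ W)) ×ˢ
        ((Finset.range (τ+1)).filter (fun j => j ∈ W)) := by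
    rw [← Finset.filter_product]
    apply Finset.filter_congr
    intro q _
    simp only [Finset.insert_subset_iff, hZ, and_true]
  rw [hbase, htop, Finset.card_powersetCard, Finset.card_product] at hW ⊢
  set a := (Finset.range M ∩ W).card with hadef
  set t := ((Finset.Ico (M+σ) n).filter (fun j => j ∈ W)).card with htdef
  set β := ((Finset.range (τ+1)).filter (fun j => j ∈ W)).card with hbdef
  -- bounds
  have ha : a ≤ 2*τ+1 := by
    calc a ≤ (Finset.range M).card := Finset.card_le_card Finset.inter_subset_left
      _ = 2*τ+1 := Finset.card_range M
  have hb1 : β ≤ τ+1 := by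
    calc β ≤ (Finset.range (τ+1)).card := Finset.card_le_card (Finset.filter_subset _ _)
      _ = τ+1 := Finset.card_range _
  have hb2 : β ≤ a := by
    apply Finset.card_le_card
    intro x hx
    have hx' := Finset.mem_filter.1 hx
    exact Finset.mem_inter.2 ⟨Finset.mem_range.2 (by have := Finset.mem_range.1 hx'.1; omega), hx'.2⟩
  -- |W| ≥ a + σ + t
  have hWcard : a + σ + t ≤ W.card := by
    have hsub : (Finset.range M ∩ W) ∪ Z ∪ ((Finset.Ico (M+σ) n).filter (fun j => j ∈ W)) ⊆ W := by
      apply Finset.union_subset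
      apply Finset.union_subset
      · exact Finset.inter_subset_right
      · exact hZ
      · exact fun x hx => (Finset.mem_filter.1 hx).2
    have hd1 : Disjoint (Finset.range M ∩ W) Z := by
      rw [Finset.disjoint_left]
      intro x hx hx'
      have := Finset.mem_range.1 (Finset.mem_inter.1 hx).1
      have := (Finset.mem_Ico.1 hx').1
      omega
    have hd2 : Disjoint ((Finset.range M ∩ W) ∪ Z) ((Finset.Ico (M+σ) n).filter (fun j => j ∈ W)) := by
      rw [Finset.disjoint_left]
      intro x hx hx'
      have hge := (Finset.mem_Ico.1 (Finset.mem_filter.1 hx').1).1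
      rcases Finset.mem_union.1 hx with h' | h'
      · have := Finset.mem_range.1 (Finset.mem_inter.1 h').1
        omega
      · have := (Finset.mem_Ico.1 h').2
        omega
    calc a + σ + t
        = ((Finset.range M ∩ W) ∪ Z ∪ _).card := by
          rw [Finset.card_union_of_disjoint hd2, Finset.card_union_of_disjoint hd1,
            hZdef, Nat.card_Ico]
          simp [hadef, htdef]
      _ ≤ W.card := Finset.card_le_card hsub
  have hkey := key_ineq τ a t β ha hb1 hb2 hW
  have hmul : (τ+1)*(a+σ+t) ≤ (τ+1)*W.card := Nat.mul_le_mul_left _ hWcard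
  have expand : (τ+1)*(a+σ+t) = (τ+1)*a + (τ+1)*σ + (τ+1)*t := by ring
  have hexp2 : (τ+1)*(σ+2) = (τ+1)*σ + 2*(τ+1) := by ring
  have final : (Nat.choose a 2 + t * β + lB) + 1 ≤ (τ+1) * W.card + 1 := by
    calc (Nat.choose a 2 + t * β + lB) + 1
        = Nat.choose a 2 + t * β + (τ+1)*(σ+2) := by rw [Nat.add_assoc, hlB]
      _ ≤ (τ+1)*a + (τ+1)*t + 1 + (τ+1)*σ := by linarith [hkey]
      _ ≤ (τ+1) * W.card + 1 := by linarith [hmul]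
  exact Nat.add_le_add_iff_right.mp final

lemma transfer (n s k l : ℕ) (E₀ : Multiset (Finset ℕ))
    (hsub : ∀ e ∈ E₀, e ⊆ Finset.range n)
    (hu : ∀ e ∈ E₀, e.card = s) (hsp : Sparse k l E₀) :
    ∃ E : Multiset (Finset (Fin n)),
      (∀ e ∈ E, e.card = s) ∧ Sparse k l E ∧ Multiset.card E = Multiset.card E₀ := by
  classical
  set F : Finset ℕ → Finset (Fin n) :=
    fun e => e.preimage (Fin.val) (Fin.val_injective.injOn) with hF
  have himg : ∀ e : Finset ℕ, e ⊆ Finset.range n → Finset.image Fin.val (F e) = e := by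
    intro e he
    rw [hF, Finset.image_preimage]
    apply Finset.filter_true_of_mem
    intro x hx
    have hxn : x < n := Finset.mem_range.1 (he hx)
    exact ⟨⟨x, hxn⟩, rfl⟩
  have hcard : ∀ e : Finset ℕ, e ⊆ Finset.range n → (F e).card = e.card := by
    intro e he
    calc (F e).card = (Finset.image Fin.val (F e)).card :=
          (Finset.card_image_of_injective _ Fin.val_injective).symm
      _ = e.card := by rw [himg e he]
  have hsubW : ∀ e : Finset ℕ, e ⊆ Finset.range n → ∀ W : Finset (Fin n),
      (F e ⊆ W ↔ e ⊆ W.image Fin.val) := by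
    intro e he W
    constructor
    · intro h x hx
      have hxn : x < n := Finset.mem_range.1 (he hx)
      have : (⟨x, hxn⟩ : Fin n) ∈ F e := by
        rw [hF, Finset.mem_preimage]; exact hx
      exact Finset.mem_image.2 ⟨⟨x, hxn⟩, h this, rfl⟩
    · intro h y hy
      rw [hF, Finset.mem_preimage] at hy
      rcases Finset.mem_image.1 (h hy) with ⟨w, hw, hwv⟩
      rwa [← Fin.val_injective hwv]
  have hspan : ∀ W : Finset (Fin n),
      spanCount (E₀.map F) W = spanCount E₀ (W.image Fin.val) := by
    intro W
    unfold spanCount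
    rw [Multiset.filter_map, Multiset.card_map]
    congr 1
    exact Multiset.filter_congr (fun e he => hsubW e (hsub e he) W)
  refine ⟨E₀.map F, ?_, ?_, by simp⟩
  · intro e he
    rcases Multiset.mem_map.1 he with ⟨e₀, he₀, rfl⟩
    rw [hcard e₀ (hsub e₀ he₀)]
    exact hu e₀ he₀
  · intro W hW
    rw [hspan] at hW ⊢
    have := hsp (W.image Fin.val) hW
    rwa [Finset.card_image_of_injective _ Fin.val_injective] at this

theorem main_nat (k σ l n : ℕ) (hk : 1 ≤ k) (hl : l + 1 ≤ (σ+2) * k) (hn : 2*k + (σ+2) ≤ n) :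
    ∃ E₀ : Multiset (Finset ℕ), (∀ e ∈ E₀, e ⊆ Finset.range n) ∧ (∀ e ∈ E₀, e.card = σ+2)
      ∧ Sparse k l E₀ ∧ Multiset.card E₀ + l = k * n := by
  have hσn : σ + 2 ≤ n := by omega
  by_cases hc : l ≤ k * (σ+1)
  · -- easy regime
    refine ⟨sunE k (σ+1) n + fullE (k*(σ+1) - l) (σ+2),
      sun_subset k (σ+1) _ n hσn, sun_uniform k (σ+1) _ n,
      sun_sparse k (σ+1) _ l n (Nat.add_sub_cancel' hc), ?_⟩
    have hcnt := sun_card k (σ+1) (k*(σ+1) - l) n (σ+2) (by omega)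
    omega
  · -- hard regime: nugget + sunflowers
    push_neg at hc
    set m := k * (σ+1) with hm
    set τ := l - m with hτ
    have hlm : l = τ + m := by omega
    have hdist : (σ+2) * k = m + k := by rw [hm]; ring
    have hτk : τ + 1 ≤ k := by omega
    obtain ⟨κ, hκ⟩ : ∃ κ, k = (τ+1) + κ := ⟨k - (τ+1), by omega⟩
    set lB := (τ+1)*(σ+2) - 1 with hlBdef
    have hlB : lB + 1 = (τ+1)*(σ+2) := by
      have : 1 ≤ (τ+1)*(σ+2) := Nat.one_le_iff_ne_zero.2 (by positivity)
      omega
    have hl' : lB + κ*(σ+1) = l := by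
      have e1 : (τ+1)*(σ+2) = (τ+1)*(σ+1) + (τ+1) := by ring
      have e2 : m = (τ+1)*(σ+1) + κ*(σ+1) := by rw [hm, hκ]; ring
      omega
    have hsp : Sparse k l (nugE τ σ n + (sunE κ (σ+1) n + fullE 0 (σ+2))) := by
      have := sparse_union (s := σ+2)
        (nug_sparse τ σ n lB hlB)
        (sun_sparse κ (σ+1) 0 (κ*(σ+1)) n (by omega))
        (nug_uniform τ σ n) (sun_uniform κ (σ+1) 0 n)
        (by omega)
        (Nat.mul_le_mul_left κ (by omega))
      rwa [← hκ, hl'] at this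
    refine ⟨nugE τ σ n + (sunE κ (σ+1) n + fullE 0 (σ+2)), ?_, ?_, hsp, ?_⟩
    · intro e he
      rcases Multiset.mem_add.1 he with h | h
      · exact nug_subset τ σ n (by omega) e h
      · exact sun_subset κ (σ+1) 0 n hσn e h
    · intro e he
      rcases Multiset.mem_add.1 he with h | h
      · exact nug_uniform τ σ n e h
      · exact sun_uniform κ (σ+1) 0 n e h
    · have h1 := nug_card τ σ n (by omega)
      have h2 := sun_card κ (σ+1) 0 n (σ+2) (by omega)
      have h3 : (τ+1)*n + κ*n = k*n := by rw [hκ]; ring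
      simp only [Multiset.card_add] at *
      omega

end St4

/-- For `k ≥ 1`, `s ≥ 2` and `0 ≤ ℓ ≤ s·k - 1`, there is an `n₁` such that for every
`n ≥ n₁` there exists an `s`-uniform `(k,ℓ)`-tight hypergraph on `n` vertices. -/
theorem stmt_4 (k s l : ℕ) (hk : 1 ≤ k) (hs : 2 ≤ s) (hl : l + 1 ≤ s * k) :
    ∃ n₁ : ℕ, ∀ n ≥ n₁, ∃ E : Multiset (Finset (Fin n)),
      (∀ e ∈ E, e.card = s) ∧ Sparse k l E ∧ Multiset.card E + l = k * n := by
  obtain ⟨σ, rfl⟩ : ∃ σ, s = σ + 2 := ⟨s - 2, by omega⟩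
  refine ⟨2*k + (σ+2), fun n hn => ?_⟩
  obtain ⟨E₀, hsub, hu, hsp, hcnt⟩ := St4.main_nat k σ l n hk hl hn
  obtain ⟨E, hEu, hEsp, hEc⟩ := St4.transfer n (σ+2) k l E₀ hsub hu hsp
  exact ⟨E, hEu, hEsp, by omega⟩
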